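/- If P is a coherent probability assessment and E₁, E₂, E₁ ∪ E₂ all belong to 𝓔 with E₁ ∩ E₂ = ∅, then P(E₁ ∪ E₂) = P(E₁) + P(E₂). -/
import Mathlib


/-- De Finetti's coherence: no finite combination of bets has uniformly negative gain,
i.e. the sup over ω of the gain is nonnegative. -/
def Coherent {Ω : Type*} (𝓔 : Set (Set Ω)) (P : Set Ω → ℝ) : Prop :=
  ∀ (n : ℕ) (E : Fin n → Set Ω) (c : Fin n → ℝ),
    (∀ i, E i ∈ 𝓔) →
    ∀ ε > (0 : ℝ), ∃ ω : Ω,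
      -ε ≤ ∑ i, c i * (P (E i) - Set.indicator (E i) (fun _ => (1 : ℝ)) ω)


theorem coherent_prob_additive {Ω : Type*} [Nonempty Ω]
    (𝓔 : Set (Set Ω)) (P : Set Ω → ℝ)
    (hP : Coherent 𝓔 P) {E₁ E₂ : Set Ω}
    (h₁ : E₁ ∈ 𝓔) (h₂ : E₂ ∈ 𝓔) (h₁₂ : E₁ ∪ E₂ ∈ 𝓔)
    (hdisj : E₁ ∩ E₂ = ∅) :
    P (E₁ ∪ E₂) = P E₁ + P E₂ := by
  have hind : ∀ ω : Ω, Set.indicator (E₁ ∪ E₂) (fun _ => (1 : ℝ)) ω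
      = Set.indicator E₁ (fun _ => (1 : ℝ)) ω + Set.indicator E₂ (fun _ => (1 : ℝ)) ω := by
    intro ω
    by_cases h1 : ω ∈ E₁ <;> by_cases h2 : ω ∈ E₂
    · exact absurd (hdisj ▸ ⟨h1, h2⟩) (Set.notMem_empty ω)
    · simp [Set.indicator_of_mem, Set.indicator_of_notMem, h1, h2, Set.mem_union]
    · simp [Set.indicator_of_mem, Set.indicator_of_notMem, h1, h2, Set.mem_union]
    · simp [Set.indicator_of_notMem, h1, h2, Set.mem_union]
  have main : ∀ s : ℝ, (s = 1 ∨ s = -1) →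
      0 ≤ s * (P E₁ + P E₂ - P (E₁ ∪ E₂)) := by
    intro s hs
    by_contra hneg
    push_neg at hneg
    set v := s * (P E₁ + P E₂ - P (E₁ ∪ E₂)) with hv
    have hε : (0:ℝ) < -v / 2 := by linarith
    obtain ⟨ω, hω⟩ := hP 3 ![E₁, E₂, E₁ ∪ E₂] ![s, s, -s]
      (by intro i; fin_cases i <;> simpa) (-v/2) hε
    rw [Fin.sum_univ_three] at hω
    simp only [Matrix.cons_val_zero, Matrix.cons_val_one, Matrix.head_cons,
      Matrix.cons_val_two, Matrix.tail_cons] at hω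
    rw [hind ω] at hω
    have : s * (P E₁ - Set.indicator E₁ (fun _ => (1:ℝ)) ω)
        + s * (P E₂ - Set.indicator E₂ (fun _ => (1:ℝ)) ω)
        + -s * (P (E₁ ∪ E₂) - (Set.indicator E₁ (fun _ => (1:ℝ)) ω
          + Set.indicator E₂ (fun _ => (1:ℝ)) ω)) = v := by ring
    rw [this] at hω
    linarith
  have h1 := main 1 (Or.inl rfl)
  have h2 := main (-1) (Or.inr rfl)
  simp only [one_mul, neg_one_mul, neg_nonneg] at h1 h2
  linarith
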